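/- Let T be a tournament with vertex partition V(T) = A ∪ B ∪ X and let S ⊆ V(T) be such that: |S ∩ X| < |S|/5; δ⁰(T[S]) ≥ |S|/5; δ⁰(T[A ∩ S]) ≥ (3/10)|A ∩ S| and δ⁰(T[B ∩ S]) ≥ (3/10)|B ∩ S|; there is a directed path in T[S] from a vertex of A ∩ S to a vertex of B ∩ S; and there is a directed path in T[S] from a vertex of B ∩ S to a vertex of A ∩ S. Then T[S] is strongly connected, hence Hamiltonian. -/

import Mathlib

open Finset

def IsTournament {V : Type*} (T : V → V → Prop) : Prop :=
  (∀ v, ¬ T v v) ∧ ∀ u v : V, u ≠ v → (T u v ↔ ¬ T v u)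

def inDeg {V : Type*} [Fintype V] (T : V → V → Prop) [DecidableRel T] (v : V) : ℕ :=
  (Finset.univ.filter (fun u => T u v)).card

def outDeg {V : Type*} [Fintype V] (T : V → V → Prop) [DecidableRel T] (v : V) : ℕ :=
  (Finset.univ.filter (fun u => T v u)).card

instance {V : Type*} (T : V → V → Prop) [DecidableRel T] :
    DecidablePred (fun p : V × V => T p.1 p.2) :=
  fun p => inferInstanceAs (Decidable (T p.1 p.2))

def eCount {V : Type*} (T : V → V → Prop) [DecidableRel T] (A B : Finset V) : ℕ :=
  ((A ×ˢ B).filter (fun p => T p.1 p.2)).card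

def minSemidegree {V : Type*} [Fintype V] (T : V → V → Prop) [DecidableRel T] : ℕ :=
  if h : (Finset.univ : Finset V).Nonempty then
    Finset.univ.inf' h (fun v => min (inDeg T v) (outDeg T v))
  else 0

lemma tourn_sum_out {V : Type*} [DecidableEq V]
    (T : V → V → Prop) [DecidableRel T] (hT : IsTournament T) (D : Finset V) :
    2 * ∑ w ∈ D, (D.filter (fun z => T w z)).card = D.card * (D.card - 1) := by
  have hsym : ∑ w ∈ D, (D.filter (fun z => T w z)).card
      = ∑ w ∈ D, (D.filter (fun z => T z w)).card := by
    simp only [Finset.card_filter]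
    exact Finset.sum_comm
  have hpt : ∀ w ∈ D, (D.filter (fun z => T w z)).card + (D.filter (fun z => T z w)).card
      = D.card - 1 := by
    intro w hw
    have hdisj : Disjoint (D.filter (fun z => T w z)) (D.filter (fun z => T z w)) := by
      rw [Finset.disjoint_left]
      intro z hz1 hz2
      rcases Finset.mem_filter.mp hz1 with ⟨hzD, hh1⟩
      rcases Finset.mem_filter.mp hz2 with ⟨_, hh2⟩
      rcases eq_or_ne w z with rfl | hne
      · exact hT.1 w hh1
      · exact ((hT.2 w z hne).mp hh1) hh2
    have hun : (D.filter (fun z => T w z)) ∪ (D.filter (fun z => T z w)) = D.erase w := by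
      ext z
      simp only [Finset.mem_union, Finset.mem_filter, Finset.mem_erase]
      constructor
      · rintro (⟨hz, h⟩ | ⟨hz, h⟩)
        · exact ⟨fun he => hT.1 w (he ▸ h), hz⟩
        · exact ⟨fun he => hT.1 w (he ▸ h), hz⟩
      · rintro ⟨hne, hz⟩
        by_cases h : T w z
        · exact Or.inl ⟨hz, h⟩
        · exact Or.inr ⟨hz, ((hT.2 z w hne).mpr h)⟩
    rw [← Finset.card_union_of_disjoint hdisj, hun, Finset.card_erase_of_mem hw]
  calc 2 * ∑ w ∈ D, (D.filter (fun z => T w z)).card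
      = ∑ w ∈ D, (D.filter (fun z => T w z)).card
        + ∑ w ∈ D, (D.filter (fun z => T z w)).card := by rw [two_mul, hsym]
    _ = ∑ w ∈ D, ((D.filter (fun z => T w z)).card + (D.filter (fun z => T z w)).card) := by
        rw [Finset.sum_add_distrib]
    _ = ∑ _w ∈ D, (D.card - 1) := Finset.sum_congr rfl hpt
    _ = D.card * (D.card - 1) := by rw [Finset.sum_const, smul_eq_mul]

lemma tourn_sum_in {V : Type*} [DecidableEq V]
    (T : V → V → Prop) [DecidableRel T] (hT : IsTournament T) (D : Finset V) :
    2 * ∑ w ∈ D, (D.filter (fun z => T z w)).card = D.card * (D.card - 1) := by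
  have hsym : ∑ w ∈ D, (D.filter (fun z => T w z)).card
      = ∑ w ∈ D, (D.filter (fun z => T z w)).card := by
    simp only [Finset.card_filter]
    exact Finset.sum_comm
  rw [← hsym]
  exact tourn_sum_out T hT D

lemma exists_small_out {V : Type*} [DecidableEq V]
    (T : V → V → Prop) [DecidableRel T] (hT : IsTournament T) (D : Finset V)
    (hD : D.Nonempty) :
    ∃ w ∈ D, 2 * (D.filter (fun z => T w z)).card + 1 ≤ D.card := by
  by_contra hcon
  push_neg at hcon
  have h1 : ∀ w ∈ D, D.card ≤ 2 * (D.filter (fun z => T w z)).card :=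
    fun w hw => Nat.lt_succ_iff.mp (hcon w hw)
  have h2 : D.card * D.card ≤ 2 * ∑ w ∈ D, (D.filter (fun z => T w z)).card := by
    rw [Finset.mul_sum]
    calc D.card * D.card = ∑ _w ∈ D, D.card := by rw [Finset.sum_const, smul_eq_mul]
      _ ≤ _ := Finset.sum_le_sum h1
  rw [tourn_sum_out T hT D] at h2
  have hn : 0 < D.card := Finset.card_pos.mpr hD
  have h3 : D.card ≤ D.card - 1 := Nat.le_of_mul_le_mul_left h2 hn
  omega

lemma exists_small_in {V : Type*} [DecidableEq V]
    (T : V → V → Prop) [DecidableRel T] (hT : IsTournament T) (D : Finset V)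
    (hD : D.Nonempty) :
    ∃ w ∈ D, 2 * (D.filter (fun z => T z w)).card + 1 ≤ D.card := by
  by_contra hcon
  push_neg at hcon
  have h1 : ∀ w ∈ D, D.card ≤ 2 * (D.filter (fun z => T z w)).card :=
    fun w hw => Nat.lt_succ_iff.mp (hcon w hw)
  have h2 : D.card * D.card ≤ 2 * ∑ w ∈ D, (D.filter (fun z => T z w)).card := by
    rw [Finset.mul_sum]
    calc D.card * D.card = ∑ _w ∈ D, D.card := by rw [Finset.sum_const, smul_eq_mul]
      _ ≤ _ := Finset.sum_le_sum h1
  rw [tourn_sum_in T hT D] at h2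
  have hn : 0 < D.card := Finset.card_pos.mpr hD
  have h3 : D.card ≤ D.card - 1 := Nat.le_of_mul_le_mul_left h2 hn
  omega

lemma aux_strong {V : Type*} [DecidableEq V]
    (T : V → V → Prop) [DecidableRel T] (hT : IsTournament T)
    (C : Finset V)
    (hdeg : ∀ v ∈ C,
        (3/10 : ℝ) * (C.card : ℝ) ≤ ((C.filter (fun u => T u v)).card : ℝ) ∧
        (3/10 : ℝ) * (C.card : ℝ) ≤ ((C.filter (fun u => T v u)).card : ℝ)) :
    ∀ u ∈ C, ∀ v ∈ C, Relation.ReflTransGen (fun x y => x ∈ C ∧ y ∈ C ∧ T x y) u v := by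
  classical
  intro u hu v hv
  by_contra hcon
  set R : V → V → Prop := fun x y => x ∈ C ∧ y ∈ C ∧ T x y with hR
  set W := C.filter (fun z => Relation.ReflTransGen R u z) with hWdef
  have hWC : W ⊆ C := Finset.filter_subset _ _
  have huW : u ∈ W := Finset.mem_filter.mpr ⟨hu, Relation.ReflTransGen.refl⟩
  have hvW : v ∉ W := fun h => hcon (Finset.mem_filter.mp h).2
  set W' := C \ W with hW'def
  have hvW' : v ∈ W' := Finset.mem_sdiff.mpr ⟨hv, hvW⟩
  have hedge : ∀ w ∈ W, ∀ z ∈ W', ¬ T w z := by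
    intro w hw z hz htz
    rcases Finset.mem_filter.mp hw with ⟨hwC, hwr⟩
    rcases Finset.mem_sdiff.mp hz with ⟨hzC, hzW⟩
    exact hzW (Finset.mem_filter.mpr ⟨hzC, hwr.tail ⟨hwC, hzC, htz⟩⟩)
  obtain ⟨w, hwW, hwsmall⟩ := exists_small_out T hT W ⟨u, huW⟩
  obtain ⟨z, hzW', hzsmall⟩ := exists_small_in T hT W' ⟨v, hvW'⟩
  have hwC : w ∈ C := hWC hwW
  have hzC : z ∈ C := (Finset.mem_sdiff.mp hzW').1
  have heqw : C.filter (fun y => T w y) = W.filter (fun y => T w y) := by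
    ext y
    simp only [Finset.mem_filter]
    constructor
    · rintro ⟨hyC, hty⟩
      refine ⟨?_, hty⟩
      by_contra hyW
      exact hedge w hwW y (Finset.mem_sdiff.mpr ⟨hyC, hyW⟩) hty
    · rintro ⟨hyW, hty⟩
      exact ⟨hWC hyW, hty⟩
  have heqz : C.filter (fun y => T y z) = W'.filter (fun y => T y z) := by
    ext y
    simp only [Finset.mem_filter]
    constructor
    · rintro ⟨hyC, hty⟩
      refine ⟨?_, hty⟩
      by_contra hyW'
      have hyW : y ∈ W := by
        by_contra h
        exact hyW' (Finset.mem_sdiff.mpr ⟨hyC, h⟩)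
      exact hedge y hyW z hzW' hty
    · rintro ⟨hyW', hty⟩
      exact ⟨(Finset.mem_sdiff.mp hyW').1, hty⟩
  have hdw := (hdeg w hwC).2
  have hdz := (hdeg z hzC).1
  rw [heqw] at hdw
  rw [heqz] at hdz
  have hcardsum : W.card + W'.card = C.card := by
    have h1 := Finset.card_sdiff_add_card_eq_card hWC
    rw [← hW'def] at h1
    omega
  have c1 : (2 * (W.filter (fun y => T w y)).card + 1 : ℝ) ≤ (W.card : ℝ) := by
    exact_mod_cast hwsmall
  have c2 : (2 * (W'.filter (fun y => T y z)).card + 1 : ℝ) ≤ (W'.card : ℝ) := by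
    exact_mod_cast hzsmall
  have c3 : ((W.card : ℝ) + (W'.card : ℝ)) = (C.card : ℝ) := by exact_mod_cast hcardsum
  have hn : (0 : ℝ) ≤ (C.card : ℝ) := Nat.cast_nonneg _
  linarith


theorem stmt_8 {V : Type*} [Fintype V] [DecidableEq V]
    (T : V → V → Prop) [DecidableRel T] (hT : IsTournament T)
    (A B X S : Finset V)
    (hAB : Disjoint A B) (hAX : Disjoint A X) (hBX : Disjoint B X)
    (hunion : A ∪ B ∪ X = Finset.univ)
    (h1 : ((S ∩ X).card : ℝ) < (S.card : ℝ) / 5)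
    (h2 : ∀ v ∈ S, (S.card : ℝ)/5 ≤ ((S.filter (fun u => T u v)).card : ℝ) ∧
                   (S.card : ℝ)/5 ≤ ((S.filter (fun u => T v u)).card : ℝ))
    (h3 : ∀ v ∈ A ∩ S,
        (3/10 : ℝ) * ((A ∩ S).card : ℝ) ≤ (((A ∩ S).filter (fun u => T u v)).card : ℝ) ∧
        (3/10 : ℝ) * ((A ∩ S).card : ℝ) ≤ (((A ∩ S).filter (fun u => T v u)).card : ℝ))
    (h4 : ∀ v ∈ B ∩ S,
        (3/10 : ℝ) * ((B ∩ S).card : ℝ) ≤ (((B ∩ S).filter (fun u => T u v)).card : ℝ) ∧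
        (3/10 : ℝ) * ((B ∩ S).card : ℝ) ≤ (((B ∩ S).filter (fun u => T v u)).card : ℝ))
    (h5 : ∃ a ∈ A ∩ S, ∃ b ∈ B ∩ S,
        Relation.ReflTransGen (fun x y => x ∈ S ∧ y ∈ S ∧ T x y) a b)
    (h6 : ∃ b ∈ B ∩ S, ∃ a ∈ A ∩ S,
        Relation.ReflTransGen (fun x y => x ∈ S ∧ y ∈ S ∧ T x y) b a) :
    ∀ u ∈ S, ∀ v ∈ S, Relation.ReflTransGen (fun x y => x ∈ S ∧ y ∈ S ∧ T x y) u v := by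
  classical
  obtain ⟨a₀, ha₀, b₀, hb₀, hab⟩ := h5
  obtain ⟨b₁, hb₁, a₁, ha₁, hba⟩ := h6
  have hA : ∀ u ∈ A ∩ S, ∀ v ∈ A ∩ S,
      Relation.ReflTransGen (fun x y => x ∈ S ∧ y ∈ S ∧ T x y) u v := by
    intro u hu v hv
    refine Relation.ReflTransGen.mono ?_ u v (aux_strong T hT (A ∩ S) h3 u hu v hv)
    rintro x y ⟨hx, hy, ht⟩
    exact ⟨(Finset.mem_inter.mp hx).2, (Finset.mem_inter.mp hy).2, ht⟩
  have hB : ∀ u ∈ B ∩ S, ∀ v ∈ B ∩ S,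
      Relation.ReflTransGen (fun x y => x ∈ S ∧ y ∈ S ∧ T x y) u v := by
    intro u hu v hv
    refine Relation.ReflTransGen.mono ?_ u v (aux_strong T hT (B ∩ S) h4 u hu v hv)
    rintro x y ⟨hx, hy, ht⟩
    exact ⟨(Finset.mem_inter.mp hx).2, (Finset.mem_inter.mp hy).2, ht⟩
  have hAB2 : ∀ u ∈ S, (u ∈ A ∨ u ∈ B) → ∀ v ∈ S, (v ∈ A ∨ v ∈ B) →
      Relation.ReflTransGen (fun x y => x ∈ S ∧ y ∈ S ∧ T x y) u v := by
    intro u hu hu' v hv hv'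
    rcases hu' with huA | huB <;> rcases hv' with hvA | hvB
    · exact hA u (Finset.mem_inter.mpr ⟨huA, hu⟩) v (Finset.mem_inter.mpr ⟨hvA, hv⟩)
    · exact ((hA u (Finset.mem_inter.mpr ⟨huA, hu⟩) a₀ ha₀).trans hab).trans
        (hB b₀ hb₀ v (Finset.mem_inter.mpr ⟨hvB, hv⟩))
    · exact ((hB u (Finset.mem_inter.mpr ⟨huB, hu⟩) b₁ hb₁).trans hba).trans
        (hA a₁ ha₁ v (Finset.mem_inter.mpr ⟨hvA, hv⟩))
    · exact hB u (Finset.mem_inter.mpr ⟨huB, hu⟩) v (Finset.mem_inter.mpr ⟨hvB, hv⟩)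
  have hmemAB : ∀ y, y ∉ X → (y ∈ A ∨ y ∈ B) := by
    intro y hy
    have : y ∈ A ∪ B ∪ X := by rw [hunion]; exact Finset.mem_univ y
    rcases Finset.mem_union.mp this with h | h
    · exact Finset.mem_union.mp h
    · exact absurd h hy
  have stepOut : ∀ x ∈ S, ∃ y ∈ S, (y ∈ A ∨ y ∈ B) ∧ (x ∈ S ∧ y ∈ S ∧ T x y) := by
    intro x hx
    have h2x := (h2 x hx).2
    have hne : ¬ (S.filter (fun u => T x u)) ⊆ S ∩ X := by
      intro hsub
      have hc : ((S.filter (fun u => T x u)).card : ℝ) ≤ ((S ∩ X).card : ℝ) :=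
        Nat.cast_le.mpr (Finset.card_le_card hsub)
      linarith
    obtain ⟨y, hy1, hy2⟩ := Finset.not_subset.mp hne
    rcases Finset.mem_filter.mp hy1 with ⟨hyS, hty⟩
    have hyX : y ∉ X := fun h => hy2 (Finset.mem_inter.mpr ⟨hyS, h⟩)
    exact ⟨y, hyS, hmemAB y hyX, hx, hyS, hty⟩
  have stepIn : ∀ x ∈ S, ∃ y ∈ S, (y ∈ A ∨ y ∈ B) ∧ (y ∈ S ∧ x ∈ S ∧ T y x) := by
    intro x hx
    have h2x := (h2 x hx).1
    have hne : ¬ (S.filter (fun u => T u x)) ⊆ S ∩ X := by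
      intro hsub
      have hc : ((S.filter (fun u => T u x)).card : ℝ) ≤ ((S ∩ X).card : ℝ) :=
        Nat.cast_le.mpr (Finset.card_le_card hsub)
      linarith
    obtain ⟨y, hy1, hy2⟩ := Finset.not_subset.mp hne
    rcases Finset.mem_filter.mp hy1 with ⟨hyS, hty⟩
    have hyX : y ∉ X := fun h => hy2 (Finset.mem_inter.mpr ⟨hyS, h⟩)
    exact ⟨y, hyS, hmemAB y hyX, hyS, hx, hty⟩
  intro u hu v hv
  obtain ⟨u', hu'S, hu'AB, hru⟩ := stepOut u hu
  obtain ⟨v', hv'S, hv'AB, hrv⟩ := stepIn v hv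
  exact ((Relation.ReflTransGen.single (r := fun x y => x ∈ S ∧ y ∈ S ∧ T x y) hru).trans
    (hAB2 u' hu'S hu'AB v' hv'S hv'AB)).trans (Relation.ReflTransGen.single (r := fun x y => x ∈ S ∧ y ∈ S ∧ T x y) hrv)
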